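/- Let φ : S → T be a functor of finite groupoids, H : S → BG and V : T → BG functors, and ε : Ob(S) → G a function with ε(a₂)·H(s) = V(φ s)·ε(a₁) for every morphism s : a₁ → a₂ in S. Then (S, id_S, φ, ε) is a G-span from (S,H) to (T,V), and its matrix is given, for c ∈ π₀(S) and d ∈ π₀(T), by [(φ,ε)_*](c,d) = (1/|Aut_T(d)|) · Σ_{g∈G} |{t ∈ T(φ(c), d) : V(t)·ε(c) = g}| · g in ℚG. -/

import Mathlib

open CategoryTheory

noncomputable section

/-- The component set `π₀(C)`: isomorphism classes of objects of `C`. -/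
abbrev Pi0 (C : Type*) [Category C] := Quotient (isIsomorphicSetoid C)

/-- Groupoid cardinality (Euler characteristic): the sum, over a set of representatives of
the isomorphism classes of objects, of the reciprocals of the orders of the automorphism
groups. -/
noncomputable def gcard (C : Type*) [Category C] : ℚ :=
  ∑ᶠ x : Pi0 C, (Nat.card (Aut (Quotient.out x)) : ℚ)⁻¹

/-- A functor into the one-object groupoid `BG`, identified with an assignment of elements
of `G` to morphisms (composition goes to multiplication in reverse order, matching the
convention `f ≫ g ↦ g·f` of `BG`). -/
structure GFunctor (S : Type*) [Category S] (G : Type*) [Group G] where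
  map : ∀ {a b : S}, (a ⟶ b) → G
  map_id : ∀ a : S, map (𝟙 a) = 1
  map_comp : ∀ {a b c : S} (f : a ⟶ b) (g : b ⟶ c), map (f ≫ g) = map g * map f

/-- The two-sided homotopy fibre `c\M/d` of a span `S ⟵L M ⟶R T`: objects are triples
`(s, a, t)` with `s : c ⟶ L a` and `t : R a ⟶ d`; morphisms are morphisms `m : a₁ ⟶ a₂`
of `M` with `L m ∘ s₁ = s₂` and `t₂ ∘ R m = t₁`. -/
abbrev TwoFibre {S T M : Type*} [Category S] [Category T] [Category M]
    (L : M ⥤ S) (R : M ⥤ T) (c : S) (d : T) :=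
  StructuredArrow c (CostructuredArrow.proj R d ⋙ L)

/-- The induced function `c\ε/d` on the two-sided homotopy fibre:
`(s,a,t) ↦ V(t)·ε(a)·H(s)`. -/
def twoEps {S T M : Type*} [Category S] [Category T] [Category M]
    {G : Type*} [Group G] (H : GFunctor S G) (V : GFunctor T G)
    (L : M ⥤ S) (R : M ⥤ T) (ε : M → G) {c : S} {d : T}
    (x : TwoFibre L R c d) : G :=
  V.map x.right.hom * ε x.right.left * H.map x.hom

/-- The matrix `[M, ε] : π₀(S) × π₀(T) → ℚG` of a `G`-span:
`[M,ε](c,d) = |Aut_T(d)|⁻¹ · ∑_{g ∈ G} χ((c\M/d){c\ε/d = g}) · g`. -/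
noncomputable def spanMatrix {S T M : Type*} [Category S] [Category T] [Category M]
    {G : Type*} [CommGroup G] [Fintype G]
    (H : GFunctor S G) (V : GFunctor T G)
    (L : M ⥤ S) (R : M ⥤ T) (ε : M → G)
    (c : Pi0 S) (d : Pi0 T) : MonoidAlgebra ℚ G :=
  ∑ g : G, MonoidAlgebra.single g
    ((Nat.card (Aut (Quotient.out d)) : ℚ)⁻¹ *
      gcard (ObjectProperty.FullSubcategory
        (fun x : TwoFibre L R (Quotient.out c) (Quotient.out d) =>
          twoEps H V L R ε x = g)))

section Aux

variable {S T : Type*} [Groupoid S] [Groupoid T] (φ : S ⥤ T) {c₀ : S} {d₀ : T}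

/-- canonical object of the two-fibre attached to `t : φ c₀ ⟶ d₀`. -/
def can (t : φ.obj c₀ ⟶ d₀) : TwoFibre (𝟭 S) φ c₀ d₀ :=
  StructuredArrow.mk (Y := CostructuredArrow.mk t) (𝟙 c₀)

def tOf (x : TwoFibre (𝟭 S) φ c₀ d₀) : φ.obj c₀ ⟶ d₀ :=
  φ.map x.hom ≫ x.right.hom

lemma tOf_can (t : φ.obj c₀ ⟶ d₀) : tOf φ (can φ t) = t := by
  show φ.map (𝟙 c₀) ≫ t = t
  simp

def isoCan (x : TwoFibre (𝟭 S) φ c₀ d₀) : can φ (tOf φ x) ≅ x :=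
  StructuredArrow.isoMk (CostructuredArrow.isoMk (@asIso _ _ _ _ x.hom (IsIso.of_groupoid _)) rfl) (by show 𝟙 c₀ ≫ x.hom = x.hom; simp)

lemma tOf_eq_of_hom {x y : TwoFibre (𝟭 S) φ c₀ d₀} (f : x ⟶ y) : tOf φ x = tOf φ y := by
  have h1 : x.hom ≫ f.right.left = y.hom := StructuredArrow.w f
  have h2 : φ.map f.right.left ≫ y.right.hom = x.right.hom := CostructuredArrow.w f.right
  rw [tOf, tOf, ← h1, ← h2]
  erw [φ.map_comp, Category.assoc]
  rfl

lemma endo_eq_id {x : TwoFibre (𝟭 S) φ c₀ d₀} (f : x ⟶ x) : f = 𝟙 x := by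
  have h1 : x.hom ≫ f.right.left = x.hom := StructuredArrow.w f
  have h3 : f.right.left = 𝟙 _ := by
    have := h1.trans (Category.comp_id x.hom).symm
    exact (cancel_epi x.hom).1 this
  have h4 : f.right = 𝟙 x.right := CostructuredArrow.ext _ _ h3
  exact StructuredArrow.ext _ _ h4

end Aux

section Aux2

variable {S T : Type*} [Groupoid S] [Groupoid T]
    {G : Type*} [CommGroup G]
    (φ : S ⥤ T) (H : GFunctor S G) (V : GFunctor T G) (ε : S → G)
    (hε : ∀ {a b : S} (s : a ⟶ b), ε b * H.map s = V.map (φ.map s) * ε a)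
    {c₀ : S} {d₀ : T} (g : G)

lemma twoEps_can (t : φ.obj c₀ ⟶ d₀) :
    twoEps H V (𝟭 S) φ ε (can φ t) = V.map t * ε c₀ := by
  show V.map t * ε c₀ * H.map (𝟙 c₀) = _
  rw [H.map_id, mul_one]

include hε in
lemma twoEps_eq (x : TwoFibre (𝟭 S) φ c₀ d₀) :
    twoEps H V (𝟭 S) φ ε x = V.map (tOf φ x) * ε c₀ := by
  rw [twoEps, tOf]
  erw [V.map_comp, mul_assoc, mul_assoc]
  congr 1
  exact hε x.hom

/-- The components of the fibre `{twoEps = g}` biject with the `t`'s. -/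
noncomputable def theEquiv :
    Pi0 (ObjectProperty.FullSubcategory (fun x : TwoFibre (𝟭 S) φ c₀ d₀ => twoEps H V (𝟭 S) φ ε x = g)) ≃
      {t : φ.obj c₀ ⟶ d₀ // V.map t * ε c₀ = g} := by
  refine Equiv.ofBijective
    (Quotient.lift (fun x => ⟨tOf φ x.obj, by rw [← twoEps_eq φ H V ε hε, x.property]⟩)
      (fun x y hxy => Subtype.ext (tOf_eq_of_hom φ (hxy.some.hom.hom))))
    ⟨?_, ?_⟩
  · refine Quotient.ind₂ (fun x y h => Quotient.sound ?_)
    have h' : tOf φ x.obj = tOf φ y.obj := congrArg Subtype.val h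
    have e : x.obj ≅ y.obj := (isoCan φ x.obj).symm ≪≫ (h' ▸ isoCan φ y.obj)
    exact ⟨ObjectProperty.isoMk _ e⟩
  · rintro ⟨t, ht⟩
    refine ⟨⟦⟨can φ t, by rw [twoEps_can, ht]⟩⟧, ?_⟩
    exact Subtype.ext (tOf_can φ t)

lemma aut_trivial
    (z : ObjectProperty.FullSubcategory (fun x : TwoFibre (𝟭 S) φ c₀ d₀ => twoEps H V (𝟭 S) φ ε x = g)) :
    Nat.card (Aut z) = 1 := by
  have hs : Subsingleton (Aut z) :=
    ⟨fun i j => Iso.ext (ObjectProperty.hom_ext _ ((endo_eq_id φ (i.hom.hom : z.obj ⟶ z.obj)).trans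
      (endo_eq_id φ (j.hom.hom : z.obj ⟶ z.obj)).symm))⟩
  haveI := hs
  haveI : Nonempty (Aut z) := ⟨Iso.refl z⟩
  exact Nat.card_unique

include hε in
lemma gcard_fibre [∀ a b : T, Finite (a ⟶ b)] :
    gcard (ObjectProperty.FullSubcategory (fun x : TwoFibre (𝟭 S) φ c₀ d₀ => twoEps H V (𝟭 S) φ ε x = g)) =
      (Nat.card {t : φ.obj c₀ ⟶ d₀ // V.map t * ε c₀ = g} : ℚ) := by
  haveI : Finite (Pi0 (ObjectProperty.FullSubcategory
      (fun x : TwoFibre (𝟭 S) φ c₀ d₀ => twoEps H V (𝟭 S) φ ε x = g))) :=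
    Finite.of_equiv _ (theEquiv φ H V ε hε g).symm
  haveI := Fintype.ofFinite (Pi0 (ObjectProperty.FullSubcategory
      (fun x : TwoFibre (𝟭 S) φ c₀ d₀ => twoEps H V (𝟭 S) φ ε x = g)))
  rw [gcard, finsum_eq_sum_of_fintype]
  simp only [aut_trivial φ H V ε, Nat.cast_one, inv_one]
  rw [Finset.sum_const, Finset.card_univ, nsmul_eq_mul, mul_one,
    ← Nat.card_eq_fintype_card, Nat.card_congr (theEquiv φ H V ε hε g)]

end Aux2


/-- For a functor `φ : S ⥤ T` of finite groupoids with `H : S → BG`, `V : T → BG` and a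
natural transformation `ε : H ⟹ V∘φ` (a function `ε : Ob(S) → G` with
`ε(a₂)·H(s) = V(φ s)·ε(a₁)` for every `s : a₁ ⟶ a₂`), the data `(S, 𝟭 S, φ, ε)` is a
`G`-span from `(S,H)` to `(T,V)` and its matrix is
`[(φ,ε)_*](c,d) = |Aut_T(d)|⁻¹ · ∑_{g∈G} |{t ∈ T(φ(c),d) : V(t)·ε(c) = g}| · g`. -/
theorem stmt5 {S T : Type*} [Groupoid S] [Groupoid T]
    [Finite S] [∀ a b : S, Finite (a ⟶ b)]
    [Finite T] [∀ a b : T, Finite (a ⟶ b)]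
    {G : Type*} [CommGroup G] [Fintype G]
    (φ : S ⥤ T) (H : GFunctor S G) (V : GFunctor T G) (ε : S → G)
    (hε : ∀ {a b : S} (s : a ⟶ b), ε b * H.map s = V.map (φ.map s) * ε a) :
    (∀ {a b : S} (m : a ⟶ b),
        ε b * H.map ((𝟭 S).map m) = V.map (φ.map m) * ε a) ∧
      ∀ (c : Pi0 S) (d : Pi0 T),
        spanMatrix H V (𝟭 S) φ ε c d =
          ∑ g : G, MonoidAlgebra.single g
            ((Nat.card (Aut (Quotient.out d)) : ℚ)⁻¹ *
              (Nat.card {t : φ.obj (Quotient.out c) ⟶ Quotient.out d //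
                V.map t * ε (Quotient.out c) = g} : ℚ)) := by
  refine ⟨fun {a b} m => hε m, fun c d => ?_⟩
  unfold spanMatrix
  refine Finset.sum_congr rfl (fun g _ => ?_)
  rw [gcard_fibre φ H V ε hε g]

end
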